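/- Let 0 < T⁻ ≤ 1 ≤ T⁺ with T⁺ - T⁻ = ln(T⁺/T⁻). Set φ = T⁺/T⁻, δ₋ = T⁻ - 1, δ₊ = T⁺ - 1, and for τ ≥ 0 define Z(τ) = φ^(exp(-τ)) · (1 + δ₋·exp(-τ)) / (1 + δ₊·exp(-τ)). Then Z(τ) ≥ 1 for all τ ≥ 0. -/

import Mathlib

theorem Z_ge_one (Tm Tp : ℝ) (hTm : 0 < Tm) (hTm1 : Tm ≤ 1) (hTp1 : 1 ≤ Tp)
    (heq : Tp - Tm = Real.log (Tp / Tm)) :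
    ∀ τ : ℝ, 0 ≤ τ →
      (Tp / Tm) ^ Real.exp (-τ) * (1 + (Tm - 1) * Real.exp (-τ)) /
        (1 + (Tp - 1) * Real.exp (-τ)) ≥ 1 := by
  have hTp0 : (0:ℝ) < Tp := lt_of_lt_of_le one_pos hTp1
  set F : ℝ → ℝ := fun s =>
    s*(Tp-Tm) - Real.log (1+(Tp-1)*s) + Real.log (1+(Tm-1)*s) with hFdef
  have hbpos : ∀ s : ℝ, 0 ≤ s → s ≤ 1 → 0 < 1+(Tm-1)*s := by
    intro s h0 h1; nlinarith
  have hapos : ∀ s : ℝ, 0 ≤ s → s ≤ 1 → 0 < 1+(Tp-1)*s := by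
    intro s h0 h1; nlinarith
  have hF0 : F 0 = 0 := by simp [hFdef]
  have hF1 : F 1 = 0 := by
    have hlog : Real.log (Tp/Tm) = Real.log Tp - Real.log Tm :=
      Real.log_div (ne_of_gt hTp0) (ne_of_gt hTm)
    have e1 : (1:ℝ)+(Tp-1)*1 = Tp := by ring
    have e2 : (1:ℝ)+(Tm-1)*1 = Tm := by ring
    simp only [hFdef, e1, e2]
    rw [hlog] at heq
    linarith
  -- derivative of F
  have hderiv : ∀ s : ℝ, 0 ≤ s → s ≤ 1 →
      HasDerivAt F ((Tp-Tm) - (Tp-1)/(1+(Tp-1)*s) + (Tm-1)/(1+(Tm-1)*s)) s := by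
    intro s h0 h1
    have ha := hapos s h0 h1
    have hb := hbpos s h0 h1
    have h1a : HasDerivAt (fun t : ℝ => 1+(Tp-1)*t) (Tp-1) s := by
      simpa using ((hasDerivAt_id s).const_mul (Tp-1)).const_add (1:ℝ)
    have h1b : HasDerivAt (fun t : ℝ => 1+(Tm-1)*t) (Tm-1) s := by
      simpa using ((hasDerivAt_id s).const_mul (Tm-1)).const_add (1:ℝ)
    have hloga : HasDerivAt (fun t : ℝ => Real.log (1+(Tp-1)*t))
        ((1+(Tp-1)*s)⁻¹ * (Tp-1)) s :=
      by have := (Real.hasDerivAt_log (ne_of_gt ha)).comp s h1a; exact this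
    have hlogb : HasDerivAt (fun t : ℝ => Real.log (1+(Tm-1)*t))
        ((1+(Tm-1)*s)⁻¹ * (Tm-1)) s :=
      by have := (Real.hasDerivAt_log (ne_of_gt hb)).comp s h1b; exact this
    have hlin : HasDerivAt (fun t : ℝ => t*(Tp-Tm)) (Tp-Tm) s := by
      simpa using (hasDerivAt_id s).mul_const (Tp-Tm)
    have := (hlin.sub hloga).add hlogb
    refine this.congr_deriv ?_
    ring
  -- sign helper: derivative equals (Tp-Tm)*(a*b-1)/(a*b)
  have hDform : ∀ s : ℝ, 0 ≤ s → s ≤ 1 →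
      (Tp-Tm) - (Tp-1)/(1+(Tp-1)*s) + (Tm-1)/(1+(Tm-1)*s)
        = (Tp-Tm) * ((1+(Tp-1)*s)*(1+(Tm-1)*s) - 1) / ((1+(Tp-1)*s)*(1+(Tm-1)*s)) := by
    intro s h0 h1
    have ha := hapos s h0 h1
    have hb := hbpos s h0 h1
    rw [sub_div' ha.ne', div_add_div _ _ ha.ne' hb.ne']
    ring
  have hTpTm : 0 ≤ Tp - Tm := by linarith
  -- key: F s ≥ 0 on [0,1]
  have hkey : ∀ s : ℝ, 0 ≤ s → s ≤ 1 → 0 ≤ F s := by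
    intro s h0 h1
    set c : ℝ := (Tp-1)+(Tm-1) with hc
    set d : ℝ := (Tp-1)*(Tm-1) with hd
    have hdle : d ≤ 0 := mul_nonpos_of_nonneg_of_nonpos (by linarith) (by linarith)
    rcases le_or_gt 0 (c + d*s) with hcase | hcase
    · -- F monotone on [0,s]
      have hmono : MonotoneOn F (Set.Icc 0 s) := by
        apply monotoneOn_of_deriv_nonneg (convex_Icc 0 s)
        · intro x hx
          exact ((hderiv x hx.1 (le_trans hx.2 h1)).continuousAt).continuousWithinAt
        · intro x hx
          rw [interior_Icc] at hx
          exact ((hderiv x hx.1.le (le_trans hx.2.le h1)).differentiableAt).differentiableWithinAt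
        · intro x hx
          rw [interior_Icc] at hx
          have hx0 : 0 ≤ x := hx.1.le
          have hx1 : x ≤ 1 := le_trans hx.2.le h1
          rw [(hderiv x hx0 hx1).deriv, hDform x hx0 hx1]
          have ha := hapos x hx0 hx1
          have hb := hbpos x hx0 hx1
          have hab1 : 0 ≤ (1+(Tp-1)*x)*(1+(Tm-1)*x) - 1 := by
            have hcdx : 0 ≤ c + d*x := by nlinarith [hx.2.le]
            have h := mul_nonneg hx0 hcdx
            rw [hc, hd] at h
            nlinarith [h]
          positivity
      have := hmono (Set.mem_Icc.mpr ⟨le_refl 0, h0⟩) (Set.mem_Icc.mpr ⟨h0, le_refl s⟩) h0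
      rw [hF0] at this
      exact this
    · -- F antitone on [s,1]
      have hanti : AntitoneOn F (Set.Icc s 1) := by
        apply antitoneOn_of_deriv_nonpos (convex_Icc s 1)
        · intro x hx
          exact ((hderiv x (le_trans h0 hx.1) hx.2).continuousAt).continuousWithinAt
        · intro x hx
          rw [interior_Icc] at hx
          exact ((hderiv x (le_trans h0 hx.1.le) hx.2.le).differentiableAt).differentiableWithinAt
        · intro x hx
          rw [interior_Icc] at hx
          have hx0 : 0 ≤ x := le_trans h0 hx.1.le
          have hx1 : x ≤ 1 := hx.2.le
          rw [(hderiv x hx0 hx1).deriv, hDform x hx0 hx1]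
          have ha := hapos x hx0 hx1
          have hb := hbpos x hx0 hx1
          have hab1 : (1+(Tp-1)*x)*(1+(Tm-1)*x) - 1 ≤ 0 := by
            have hcdx : c + d*x ≤ 0 := by nlinarith [hx.1.le]
            have h := mul_nonpos_of_nonneg_of_nonpos hx0 hcdx
            rw [hc, hd] at h
            nlinarith [h]
          have habpos : 0 < (1+(Tp-1)*x)*(1+(Tm-1)*x) := mul_pos ha hb
          apply div_nonpos_of_nonpos_of_nonneg _ habpos.le
          exact mul_nonpos_of_nonneg_of_nonpos hTpTm hab1
      have := hanti (Set.mem_Icc.mpr ⟨le_refl s, h1⟩) (Set.mem_Icc.mpr ⟨h1, le_refl 1⟩) h1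
      rw [hF1] at this
      exact this
  -- main conclusion
  intro τ hτ
  set s := Real.exp (-τ) with hs
  have hs0 : 0 < s := Real.exp_pos _
  have hs1 : s ≤ 1 := Real.exp_le_one_iff.mpr (by linarith)
  have ha := hapos s hs0.le hs1
  have hb := hbpos s hs0.le hs1
  have hφ : 0 < Tp/Tm := div_pos hTp0 hTm
  rw [ge_iff_le, le_div_iff₀ ha, one_mul]
  have hFs := hkey s hs0.le hs1
  have hrhs : 0 < (Tp/Tm) ^ s * (1 + (Tm-1)*s) := mul_pos (Real.rpow_pos_of_pos hφ s) hb
  rw [← Real.log_le_log_iff ha hrhs]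
  rw [Real.log_mul (ne_of_gt (Real.rpow_pos_of_pos hφ s)) (ne_of_gt hb),
    Real.log_rpow hφ, ← heq]
  simp only [hFdef] at hFs
  linarith
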